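/- Fix n ≥ 2 and regard the 2n−1 parameters a_{01}, a_{21}, …, a_{n1}, a_{12}, …, a_{1n} as indeterminates. Let c = (c_0, …, c_{n−1}, d_0, …, d_{n−2}) be the coefficient map of the n-compartment mammillary model, a tuple of 2n−1 polynomials in these 2n−1 indeterminates. Then the determinant of the (2n−1)×(2n−1) Jacobian matrix of c equals, up to sign, a_{12}a_{13}⋯a_{1n} · ∏_{2 ≤ i < j ≤ n} (a_{1i} − a_{1j})^2. In particular, the locus of non-identifiable parameter values of the mammillary model is defined by the vanishing of a_{12}a_{13}⋯a_{1n} · ∏_{2 ≤ i < j ≤ n} (a_{1i} − a_{1j})^2. -/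

import Mathlib

open MvPolynomial

/-- Index `k : Fin (m+2)` (a compartment `k+1 ∈ {2,…,n}`, `k ≥ 1`) recast in `Fin (m+1)`
(as `k - 1 ∈ {0,…,n-2}`). -/
def subOne {m : ℕ} (k : Fin (m + 2)) : Fin (m + 1) :=
  ⟨k.val - 1, by have := k.isLt; omega⟩

/-- The mammillary (star) compartmental matrix with `n = m + 2` compartments:
`A 0 0 = -a₀₁ - (a₂₁ + ⋯ + a_{n1})`, first row `a_{1k}`, first column `a_{k1}`,
diagonal `-a_{1k}`, all other entries `0`.  Here `aK1 k = a_{k+2,1}` and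
`a1K k = a_{1,k+2}` for `k : Fin (m+1)`. -/
def mamMatrix {R : Type*} [CommRing R] (m : ℕ) (a01 : R) (aK1 a1K : Fin (m + 1) → R) :
    Matrix (Fin (m + 2)) (Fin (m + 2)) R :=
  Matrix.of fun i j =>
    if i = 0 then (if j = 0 then -a01 - ∑ k, aK1 k else a1K (subOne j))
    else if j = 0 then aK1 (subOne i)
    else if i = j then -(a1K (subOne i)) else 0

/-- Index type for the `2n - 1` parameters of the mammillary model (`n = m + 2`):
`.inl 0 ↦ a₀₁`, `.inl (k+1) ↦ a_{k+2,1}`, `.inr k ↦ a_{1,k+2}`. -/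
abbrev MamIx (m : ℕ) := Fin (m + 2) ⊕ Fin (m + 1)

/-- The mammillary compartmental matrix with the parameters as indeterminates. -/
noncomputable def mamA (m : ℕ) :
    Matrix (Fin (m + 2)) (Fin (m + 2)) (MvPolynomial (MamIx m) ℝ) :=
  mamMatrix m (X (Sum.inl 0)) (fun k => X (Sum.inl k.succ)) (fun k => X (Sum.inr k))

/-- The coefficient map of the mammillary model: `.inl i ↦ c_i` (coefficient of `λ^i` in
`det (λI - A)`), `.inr i ↦ d_i` (coefficient of `λ^i` in `det (λI - A₁₁)`). -/
noncomputable def mamCoeff (m : ℕ) : MamIx m → MvPolynomial (MamIx m) ℝ :=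
  Sum.elim (fun i => (mamA m).charpoly.coeff i.val)
    (fun i => ((mamA m).submatrix Fin.succ Fin.succ).charpoly.coeff i.val)

/-- The `(2n-1) × (2n-1)` Jacobian matrix of the coefficient map of the mammillary model. -/
noncomputable def mamJac (m : ℕ) : Matrix (MamIx m) (MamIx m) (MvPolynomial (MamIx m) ℝ) :=
  Matrix.of fun s t => MvPolynomial.pderiv t (mamCoeff m s)

/-- The singular-locus polynomial `a₁₂a₁₃⋯a_{1n} · ∏_{2 ≤ i < j ≤ n} (a_{1i} - a_{1j})²`. -/
noncomputable def mamSing (m : ℕ) : MvPolynomial (MamIx m) ℝ :=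
  (∏ k : Fin (m + 1), X (Sum.inr k)) *
    ∏ p ∈ Finset.univ.filter (fun p : Fin (m + 1) × Fin (m + 1) => p.1 < p.2),
      (X (Sum.inr p.1) - X (Sum.inr p.2)) ^ 2

lemma subOne_succ {m : ℕ} (k : Fin (m + 1)) : subOne k.succ = k := by
  ext; simp [subOne]

open Finset in
lemma det_arrowhead {R : Type*} [CommRing R] {m : ℕ} (α : R) (u t d : Fin (m + 1) → R) :
    (Matrix.of fun i j : Fin (m + 2) =>
      if i = 0 then (if j = 0 then α else u (subOne j))
      else if j = 0 then t (subOne i)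
      else if i = j then d (subOne i) else 0).det
    = α * ∏ k, d k - ∑ k, u k * t k * ∏ j ∈ Finset.univ.erase k, d j := by
  classical
  set M : Matrix (Fin (m + 2)) (Fin (m + 2)) R := Matrix.of fun i j : Fin (m + 2) =>
      if i = 0 then (if j = 0 then α else u (subOne j))
      else if j = 0 then t (subOne i)
      else if i = j then d (subOne i) else 0 with hM
  have hsmul : ∀ x : R, (-1 : ℤˣ) • x = -x := fun x => by simp
  set S : Finset (Equiv.Perm (Fin (m + 2))) :=
    insert 1 (Finset.univ.image fun k : Fin (m + 1) => Equiv.swap 0 k.succ) with hS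
  rw [Matrix.det_apply]
  rw [← Finset.sum_subset (Finset.subset_univ S) ?van]
  case van =>
    intro σ _ hσ
    have : ∃ i : Fin (m + 2), i ≠ 0 ∧ σ i ≠ 0 ∧ σ i ≠ i := by
      by_contra h'
      push_neg at h'
      apply hσ
      by_cases h0 : σ 0 = 0
      · have : σ = 1 := by
          ext i
          by_cases hi : i = 0
          · simp [hi, h0]
          · by_cases hz : σ i = 0
            · exact absurd (σ.injective (hz.trans h0.symm)) hi
            · simp [h' i hi hz]
        simp [hS, this]
      · obtain ⟨k, hk⟩ := Fin.eq_succ_of_ne_zero h0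
        have hσeq : σ = Equiv.swap 0 k.succ := by
          ext i
          by_cases hi : i = 0
          · simp [hi, ← hk, Equiv.swap_apply_left]
          by_cases hik : i = k.succ
          · by_cases hz : σ i = 0
            · rw [hik, Equiv.swap_apply_right, ← hik, hz]
            · exfalso
              have h2 := h' i hi hz
              exact hi (σ.injective (h2.trans (hk.trans hik.symm).symm))
          · by_cases hz : σ i = 0
            · exfalso
              by_cases hz2 : σ k.succ = 0
              · exact hik (σ.injective (hz.trans hz2.symm))
              · have h3 := h' k.succ (Fin.succ_ne_zero k) hz2
                exact (Fin.succ_ne_zero k) (σ.injective (hk.trans h3.symm)).symm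
            · rw [h' i hi hz, Equiv.swap_apply_of_ne_of_ne hi hik]
        rw [hS]
        exact Finset.mem_insert_of_mem (Finset.mem_image.2 ⟨k, Finset.mem_univ _, hσeq.symm⟩)
    obtain ⟨i, hi, h1, h2⟩ := this
    have hz : M (σ i) i = 0 := by simp [hM, h1, hi, h2]
    have hp : (∏ j, M (σ j) j) = 0 := Finset.prod_eq_zero (Finset.mem_univ i) hz
    rw [hp, smul_zero]
  · have h1mem : (1 : Equiv.Perm (Fin (m + 2))) ∉
        (Finset.univ.image fun k : Fin (m + 1) => Equiv.swap 0 k.succ) := by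
      simp only [Finset.mem_image, Finset.mem_univ, true_and, not_exists]
      intro k h
      rw [Equiv.ext_iff] at h
      have := h 0
      simp only [Equiv.swap_apply_left, Equiv.Perm.one_apply] at this
      exact Fin.succ_ne_zero k this
    have hinj : ∀ x ∈ Finset.univ, ∀ y ∈ Finset.univ,
        (fun k : Fin (m + 1) => Equiv.swap (0 : Fin (m+2)) k.succ) x
        = (fun k : Fin (m + 1) => Equiv.swap (0 : Fin (m+2)) k.succ) y → x = y := by
      intro k _ l _ h
      rw [Equiv.ext_iff] at h
      have := h 0
      simpa [Equiv.swap_apply_left, Fin.succ_inj] using this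
    rw [hS, Finset.sum_insert h1mem, Finset.sum_image hinj]
    have hterm1 : (Equiv.Perm.sign (1 : Equiv.Perm (Fin (m+2)))) •
        (∏ i, M ((1 : Equiv.Perm (Fin (m+2))) i) i) = α * ∏ k, d k := by
      rw [Equiv.Perm.sign_one, one_smul]
      simp only [Equiv.Perm.one_apply]
      rw [Fin.prod_univ_succ]
      have h0 : M 0 0 = α := by simp [hM]
      rw [h0]
      congr 1
      refine Finset.prod_congr rfl fun k _ => ?_
      simp [hM, Fin.succ_ne_zero, subOne_succ]
    have hterm2 : ∀ k : Fin (m + 1),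
        (Equiv.Perm.sign (Equiv.swap (0 : Fin (m+2)) k.succ)) •
          (∏ i, M (Equiv.swap (0 : Fin (m+2)) k.succ i) i)
        = -(u k * t k * ∏ j ∈ Finset.univ.erase k, d j) := by
      intro k
      rw [Equiv.Perm.sign_swap (Fin.succ_ne_zero k).symm, hsmul]
      congr 1
      rw [Fin.prod_univ_succ, Equiv.swap_apply_left]
      have hk0 : M k.succ 0 = t k := by simp [hM, Fin.succ_ne_zero, subOne_succ]
      rw [hk0]
      rw [← Finset.mul_prod_erase Finset.univ
        (fun j : Fin (m+1) => M (Equiv.swap (0 : Fin (m+2)) k.succ j.succ) j.succ)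
        (Finset.mem_univ k)]
      simp only [Equiv.swap_apply_right]
      have h0k : M 0 k.succ = u k := by simp [hM, Fin.succ_ne_zero, subOne_succ]
      rw [h0k]
      have he : ∏ j ∈ Finset.univ.erase k, M (Equiv.swap (0 : Fin (m+2)) k.succ j.succ) j.succ
          = ∏ j ∈ Finset.univ.erase k, d j := by
        refine Finset.prod_congr rfl fun j hj => ?_
        have hj' : j ≠ k := Finset.ne_of_mem_erase hj
        rw [Equiv.swap_apply_of_ne_of_ne (Fin.succ_ne_zero j)
          (fun h => hj' (Fin.succ_injective _ h))]
        simp [hM, Fin.succ_ne_zero, subOne_succ]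
      rw [he]
      ring
    rw [hterm1, Finset.sum_congr rfl fun k _ => hterm2 k]
    rw [Finset.sum_neg_distrib]
    ring

/-- `∏ (λ + b_k)`, the charpoly of the diagonal block. -/
noncomputable def Qf (m : ℕ) : Polynomial (MvPolynomial (MamIx m) ℝ) :=
  ∏ k : Fin (m + 1), (Polynomial.X + Polynomial.C (X (Sum.inr k)))

/-- `∏_{j ≠ k} (λ + b_j)`. -/
noncomputable def Qe (m : ℕ) (k : Fin (m + 1)) : Polynomial (MvPolynomial (MamIx m) ℝ) :=
  ∏ j ∈ Finset.univ.erase k, (Polynomial.X + Polynomial.C (X (Sum.inr j)))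

lemma Qf_eq (m : ℕ) (k : Fin (m + 1)) :
    Qf m = (Polynomial.X + Polynomial.C (X (Sum.inr k))) * Qe m k :=
  (Finset.mul_prod_erase Finset.univ _ (Finset.mem_univ k)).symm

noncomputable def aP (m : ℕ) : Polynomial (MvPolynomial (MamIx m) ℝ) :=
  Polynomial.X + Polynomial.C (X (Sum.inl 0))
    + Polynomial.C (∑ k : Fin (m + 1), X (Sum.inl k.succ))

noncomputable def uP (m : ℕ) (k : Fin (m + 1)) : Polynomial (MvPolynomial (MamIx m) ℝ) :=
  -Polynomial.C (X (Sum.inr k) : MvPolynomial (MamIx m) ℝ)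

noncomputable def tP (m : ℕ) (k : Fin (m + 1)) : Polynomial (MvPolynomial (MamIx m) ℝ) :=
  -Polynomial.C (X (Sum.inl k.succ) : MvPolynomial (MamIx m) ℝ)

noncomputable def dP (m : ℕ) (k : Fin (m + 1)) : Polynomial (MvPolynomial (MamIx m) ℝ) :=
  Polynomial.X + Polynomial.C (X (Sum.inr k))

lemma charpoly_mamA (m : ℕ) :
    (mamA m).charpoly
      = aP m * Qf m
        - ∑ k, Polynomial.C (X (Sum.inl k.succ) * X (Sum.inr k)) * Qe m k := by
  have hcm : (mamA m).charmatrix = Matrix.of fun i j : Fin (m + 2) =>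
      if i = 0 then (if j = 0 then aP m else uP m (subOne j))
      else if j = 0 then tP m (subOne i)
      else if i = j then dP m (subOne i) else 0 := by
    refine Matrix.ext fun i j => ?_
    by_cases hi : i = 0
    · by_cases hj : j = 0
      · subst hi; subst hj
        rw [Matrix.charmatrix_apply_eq]
        have h00 : mamA m 0 0 = -X (Sum.inl 0) - ∑ k : Fin (m + 1), X (Sum.inl k.succ) := by
          simp [mamA, mamMatrix]
        rw [h00, map_sub, map_neg]
        simp only [Matrix.of_apply, aP]
        simp
        ring
      · have hij : i ≠ j := by subst hi; exact fun h => hj h.symm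
        subst hi
        rw [Matrix.charmatrix_apply_ne _ _ _ hij]
        have h1 : mamA m 0 j = X (Sum.inr (subOne j)) := by simp [mamA, mamMatrix, hj]
        rw [h1]
        simp [uP, hj]
    · by_cases hj : j = 0
      · have hij : i ≠ j := fun h => hi (h.trans hj)
        subst hj
        rw [Matrix.charmatrix_apply_ne _ _ _ hij]
        have h1 : mamA m i 0 = X (Sum.inl (subOne i).succ) := by simp [mamA, mamMatrix, hi]
        rw [h1]
        simp [tP, hi]
      · by_cases hij : i = j
        · subst hij
          rw [Matrix.charmatrix_apply_eq]
          have h1 : mamA m i i = -(X (Sum.inr (subOne i))) := by simp [mamA, mamMatrix, hi]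
          rw [h1, map_neg, sub_neg_eq_add]
          simp [dP, hi]
        · rw [Matrix.charmatrix_apply_ne _ _ _ hij]
          have h1 : mamA m i j = 0 := by simp [mamA, mamMatrix, hi, hj, hij]
          rw [h1, map_zero, neg_zero]
          simp [hi, hj, hij]
  rw [Matrix.charpoly, hcm, det_arrowhead (aP m) (uP m) (tP m) (dP m)]
  have hQf : (∏ k, dP m k) = Qf m := rfl
  rw [hQf]
  rw [sub_right_inj]
  refine Finset.sum_congr rfl fun k _ => ?_
  unfold uP tP Qe
  have he : (∏ j ∈ Finset.univ.erase k, dP m j)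
      = ∏ j ∈ Finset.univ.erase k, (Polynomial.X + Polynomial.C (X (Sum.inr j))) := rfl
  rw [he, map_mul]
  ring

lemma charpoly_submatrix (m : ℕ) :
    ((mamA m).submatrix Fin.succ Fin.succ).charpoly = Qf m := by
  have h1 : (mamA m).submatrix Fin.succ Fin.succ
      = Matrix.diagonal (fun k : Fin (m + 1) => -(X (Sum.inr k) : MvPolynomial (MamIx m) ℝ)) := by
    refine Matrix.ext fun i j => ?_
    by_cases h : i = j
    · subst h
      simp [mamA, mamMatrix, Matrix.submatrix_apply, Fin.succ_ne_zero, subOne_succ]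
    · rw [Matrix.submatrix_apply, Matrix.diagonal_apply_ne _ h]
      have : Fin.succ i ≠ Fin.succ j := fun hh => h (Fin.succ_injective _ hh)
      simp [mamA, mamMatrix, Fin.succ_ne_zero, this]
  rw [h1]
  have h2 : Matrix.charmatrix (Matrix.diagonal fun k : Fin (m + 1) =>
        -(X (Sum.inr k) : MvPolynomial (MamIx m) ℝ))
      = Matrix.diagonal (fun k : Fin (m + 1) =>
        Polynomial.X + Polynomial.C (X (Sum.inr k))) := by
    refine Matrix.ext fun i j => ?_
    by_cases h : i = j
    · subst h
      rw [Matrix.charmatrix_apply_eq, Matrix.diagonal_apply_eq, Matrix.diagonal_apply_eq,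
        map_neg, sub_neg_eq_add]
    · rw [Matrix.charmatrix_apply_ne _ _ _ h, Matrix.diagonal_apply_ne _ h,
        Matrix.diagonal_apply_ne _ h, map_zero, neg_zero]
  rw [Matrix.charpoly, h2, Matrix.det_diagonal]
  rfl

section pderivCoeff

variable {σ : Type*} {ι : Type*} [DecidableEq σ] [DecidableEq ι]

lemma pderiv_coeff_X_mul (v : σ) (p : Polynomial (MvPolynomial σ ℝ))
    (h : ∀ i, pderiv v (p.coeff i) = 0) (i : ℕ) :
    pderiv v ((Polynomial.X * p).coeff i) = 0 := by
  cases i with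
  | zero => simp [Polynomial.mul_coeff_zero]
  | succ n => rw [Polynomial.coeff_X_mul]; exact h n

lemma pderiv_coeff_prod_eq_zero (v : σ) (s : Finset ι) (c : ι → MvPolynomial σ ℝ)
    (h : ∀ j ∈ s, pderiv v (c j) = 0) (i : ℕ) :
    pderiv v ((∏ j ∈ s, (Polynomial.X + Polynomial.C (c j))).coeff i) = 0 := by
  induction s using Finset.induction generalizing i with
  | empty =>
    simp only [Finset.prod_empty, Polynomial.coeff_one]
    split <;> simp
  | @insert a s ha ih =>
    have hs : ∀ j ∈ s, pderiv v (c j) = 0 := fun j hj => h j (Finset.mem_insert_of_mem hj)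
    rw [Finset.prod_insert ha, add_mul, Polynomial.coeff_add, Polynomial.coeff_C_mul, map_add,
      pderiv_mul]
    rw [pderiv_coeff_X_mul v _ (fun i => ih hs i) i, h a (Finset.mem_insert_self a s), ih hs i]
    ring

lemma pderiv_coeff_prod_mem (v : σ) (s : Finset ι) (c : ι → MvPolynomial σ ℝ) (k : ι)
    (hk : k ∈ s) (hck : pderiv v (c k) = 1) (h : ∀ j ∈ s, j ≠ k → pderiv v (c j) = 0) (i : ℕ) :
    pderiv v ((∏ j ∈ s, (Polynomial.X + Polynomial.C (c j))).coeff i)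
      = (∏ j ∈ s.erase k, (Polynomial.X + Polynomial.C (c j))).coeff i := by
  have he : ∀ j ∈ s.erase k, pderiv v (c j) = 0 := fun j hj =>
    h j (Finset.mem_of_mem_erase hj) (Finset.ne_of_mem_erase hj)
  rw [← Finset.mul_prod_erase s _ hk, add_mul, Polynomial.coeff_add, Polynomial.coeff_C_mul,
    map_add, pderiv_mul]
  rw [pderiv_coeff_X_mul v _ (fun i => pderiv_coeff_prod_eq_zero v _ c he i) i, hck,
    pderiv_coeff_prod_eq_zero v _ c he i]
  ring

end pderivCoeff

lemma Qf_coeff_pderiv_inl (m : ℕ) (w : Fin (m + 2)) (i : ℕ) :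
    pderiv (Sum.inl w : MamIx m) ((Qf m).coeff i) = 0 :=
  pderiv_coeff_prod_eq_zero _ _ _ (fun j _ => pderiv_X_of_ne (by simp)) i

lemma Qe_coeff_pderiv_inl (m : ℕ) (w : Fin (m + 2)) (k : Fin (m + 1)) (i : ℕ) :
    pderiv (Sum.inl w : MamIx m) ((Qe m k).coeff i) = 0 :=
  pderiv_coeff_prod_eq_zero _ _ _ (fun j _ => pderiv_X_of_ne (by simp)) i

lemma Qf_coeff_sub (m : ℕ) (k : Fin (m + 1)) (i : ℕ) :
    (Qf m).coeff i - X (Sum.inr k) * (Qe m k).coeff i = (Polynomial.X * Qe m k).coeff i := by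
  rw [Qf_eq m k, add_mul, Polynomial.coeff_add, Polynomial.coeff_C_mul]
  ring

lemma charpoly_coeff_eq (m : ℕ) (i : ℕ) :
    (mamA m).charpoly.coeff i
      = (Polynomial.X * Qf m).coeff i
        + X (Sum.inl 0) * (Qf m).coeff i
        + (∑ k : Fin (m + 1), X (Sum.inl k.succ)) * (Qf m).coeff i
        - ∑ k : Fin (m + 1), X (Sum.inl k.succ) * X (Sum.inr k) * (Qe m k).coeff i := by
  rw [charpoly_mamA]
  have ha : aP m * Qf m = Polynomial.X * Qf m + Polynomial.C (X (Sum.inl 0)) * Qf m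
      + Polynomial.C (∑ k : Fin (m + 1), X (Sum.inl k.succ)) * Qf m := by
    unfold aP; ring
  rw [ha, Polynomial.coeff_sub, Polynomial.coeff_add, Polynomial.coeff_add,
    Polynomial.coeff_C_mul, Polynomial.coeff_C_mul, Polynomial.finset_sum_coeff]
  congr 1
  refine Finset.sum_congr rfl fun k _ => ?_
  rw [Polynomial.coeff_C_mul]

lemma jac11_zero (m : ℕ) (i : Fin (m + 2)) :
    mamJac m (Sum.inl i) (Sum.inl 0) = (Qf m).coeff i.val := by
  show pderiv (Sum.inl 0 : MamIx m) ((mamA m).charpoly.coeff i.val) = _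
  rw [charpoly_coeff_eq, map_sub, map_add, map_add, pderiv_mul, pderiv_mul, map_sum, map_sum]
  rw [pderiv_coeff_X_mul _ _ (Qf_coeff_pderiv_inl m 0) i.val]
  have hx : pderiv (Sum.inl 0 : MamIx m) (X (Sum.inl 0) : MvPolynomial (MamIx m) ℝ) = 1 :=
    pderiv_X_self _
  rw [Qf_coeff_pderiv_inl, hx]
  have hsum0 : ∀ l : Fin (m + 1), l ∈ Finset.univ →
      pderiv (Sum.inl 0 : MamIx m) (X (Sum.inl l.succ) : MvPolynomial (MamIx m) ℝ) = 0 :=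
    fun l _ => pderiv_X_of_ne (by simp [Fin.succ_ne_zero])
  rw [Finset.sum_congr rfl hsum0]
  have hterm : ∀ k : Fin (m + 1), k ∈ Finset.univ →
      pderiv (Sum.inl 0 : MamIx m) (X (Sum.inl k.succ) * X (Sum.inr k) * (Qe m k).coeff i.val)
        = 0 := by
    intro k _
    rw [pderiv_mul, pderiv_mul, pderiv_X_of_ne (by simp [Fin.succ_ne_zero]),
      pderiv_X_of_ne (by simp), Qe_coeff_pderiv_inl]
    ring
  rw [Finset.sum_congr rfl hterm]
  simp

lemma jac11_succ (m : ℕ) (i : Fin (m + 2)) (k : Fin (m + 1)) :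
    mamJac m (Sum.inl i) (Sum.inl k.succ) = (Polynomial.X * Qe m k).coeff i.val := by
  show pderiv (Sum.inl k.succ : MamIx m) ((mamA m).charpoly.coeff i.val) = _
  rw [charpoly_coeff_eq, map_sub, map_add, map_add, pderiv_mul, pderiv_mul, map_sum, map_sum]
  rw [pderiv_coeff_X_mul _ _ (Qf_coeff_pderiv_inl m k.succ) i.val]
  have hx : pderiv (Sum.inl k.succ : MamIx m) (X (Sum.inl 0) : MvPolynomial (MamIx m) ℝ) = 0 :=
    pderiv_X_of_ne (by simp [(Fin.succ_ne_zero k).symm])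
  rw [Qf_coeff_pderiv_inl, hx]
  have hsum1 : ∀ l : Fin (m + 1), l ∈ Finset.univ →
      pderiv (Sum.inl k.succ : MamIx m) (X (Sum.inl l.succ) : MvPolynomial (MamIx m) ℝ)
        = (if l = k then 1 else 0) := by
    intro l _
    by_cases hl : l = k
    · subst hl; rw [if_pos rfl]; exact pderiv_X_self _
    · rw [if_neg hl]
      exact pderiv_X_of_ne (by simpa [Fin.succ_inj] using hl)
  rw [Finset.sum_congr rfl hsum1, Finset.sum_ite_eq' Finset.univ k (fun _ => (1 : MvPolynomial (MamIx m) ℝ))]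
  have hterm : ∀ l : Fin (m + 1), l ∈ Finset.univ →
      pderiv (Sum.inl k.succ : MamIx m) (X (Sum.inl l.succ) * X (Sum.inr l) * (Qe m l).coeff i.val)
        = (if l = k then X (Sum.inr k) * (Qe m k).coeff i.val else 0) := by
    intro l _
    by_cases hl : l = k
    · subst hl
      have hx2 : pderiv (Sum.inl l.succ : MamIx m)
          (X (Sum.inl l.succ) : MvPolynomial (MamIx m) ℝ) = 1 := pderiv_X_self _
      rw [if_pos rfl, pderiv_mul, pderiv_mul, hx2, pderiv_X_of_ne (by simp),
        Qe_coeff_pderiv_inl]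
      ring
    · rw [if_neg hl, pderiv_mul, pderiv_mul,
        pderiv_X_of_ne (by simpa [Fin.succ_inj] using hl),
        pderiv_X_of_ne (by simp), Qe_coeff_pderiv_inl]
      ring
  rw [Finset.sum_congr rfl hterm, Finset.sum_ite_eq' Finset.univ k
    (fun _ => X (Sum.inr k) * (Qe m k).coeff i.val)]
  simp only [Finset.mem_univ, if_pos]
  rw [← Qf_coeff_sub m k i.val]
  ring

lemma jac21 (m : ℕ) (i : Fin (m + 1)) (w : Fin (m + 2)) :
    mamJac m (Sum.inr i) (Sum.inl w) = 0 := by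
  show pderiv (Sum.inl w : MamIx m) (((mamA m).submatrix Fin.succ Fin.succ).charpoly.coeff i.val)
      = 0
  rw [charpoly_submatrix]
  exact Qf_coeff_pderiv_inl m w i.val

lemma jac22 (m : ℕ) (i : Fin (m + 1)) (k : Fin (m + 1)) :
    mamJac m (Sum.inr i) (Sum.inr k) = (Qe m k).coeff i.val := by
  show pderiv (Sum.inr k : MamIx m) (((mamA m).submatrix Fin.succ Fin.succ).charpoly.coeff i.val)
      = _
  rw [charpoly_submatrix]
  unfold Qf Qe
  exact pderiv_coeff_prod_mem (Sum.inr k : MamIx m) Finset.univ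
    (fun j : Fin (m + 1) => X (Sum.inr j)) k (Finset.mem_univ k) (pderiv_X_self _)
    (fun j _ hj => pderiv_X_of_ne (by simp [hj])) i.val

section vand

variable {R : Type*} [CommRing R]

lemma vandermonde_mul_coeff {N : ℕ} (x : Fin N → R) (f : Fin N → Polynomial R)
    (h : ∀ k, (f k).natDegree < N) :
    Matrix.vandermonde x * Matrix.of (fun i k : Fin N => (f k).coeff i.val)
      = Matrix.of (fun l k => (f k).eval (x l)) := by
  refine Matrix.ext fun l k => ?_
  rw [Matrix.mul_apply, Matrix.of_apply]
  simp only [Matrix.vandermonde_apply, Matrix.of_apply]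
  rw [Polynomial.eval_eq_sum_range' (h k), ← Fin.sum_univ_eq_sum_range
    (fun j => (f k).coeff j * x l ^ j)]
  exact Finset.sum_congr rfl fun j _ => mul_comm _ _

lemma natDegree_prod_X_add_C_le {ι : Type*} [Nontrivial R] (s : Finset ι) (c : ι → R) :
    (∏ j ∈ s, (Polynomial.X + Polynomial.C (c j))).natDegree ≤ s.card := by
  refine le_trans (Polynomial.natDegree_prod_le s _) ?_
  have : ∀ j ∈ s, (Polynomial.X + Polynomial.C (c j)).natDegree = 1 := fun j _ =>
    Polynomial.natDegree_X_add_C (c j)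
  rw [Finset.sum_congr rfl this, Finset.sum_const, smul_eq_mul, mul_one]

lemma eval_prod_X_add_C {ι : Type*} (s : Finset ι) (c : ι → R) (z : R) :
    (∏ j ∈ s, (Polynomial.X + Polynomial.C (c j))).eval z = ∏ j ∈ s, (z + c j) := by
  simp [Polynomial.eval_prod]

end vand

noncomputable def bX (m : ℕ) (k : Fin (m + 1)) : MvPolynomial (MamIx m) ℝ := X (Sum.inr k)

noncomputable def gM (m : ℕ) (k : Fin (m + 2)) : Polynomial (MvPolynomial (MamIx m) ℝ) :=
  Fin.cases (Qf m) (fun k' => Polynomial.X * Qe m k') k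

noncomputable def Mblk (m : ℕ) : Matrix (Fin (m + 2)) (Fin (m + 2)) (MvPolynomial (MamIx m) ℝ) :=
  Matrix.of fun i k => (gM m k).coeff i.val

noncomputable def Pblk (m : ℕ) : Matrix (Fin (m + 1)) (Fin (m + 1)) (MvPolynomial (MamIx m) ℝ) :=
  Matrix.of fun i k => (Qe m k).coeff i.val

noncomputable def eD (m : ℕ) (k : Fin (m + 1)) : MvPolynomial (MamIx m) ℝ :=
  ∏ j ∈ Finset.univ.erase k, (bX m j - bX m k)

noncomputable def betaP (m : ℕ) : MvPolynomial (MamIx m) ℝ := ∏ k, bX m k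
noncomputable def betaN (m : ℕ) : MvPolynomial (MamIx m) ℝ := ∏ k, -(bX m k)
noncomputable def DeltaP (m : ℕ) : MvPolynomial (MamIx m) ℝ :=
  ∏ i, ∏ j ∈ Finset.Ioi i, (bX m i - bX m j)
noncomputable def GammaP (m : ℕ) : MvPolynomial (MamIx m) ℝ :=
  ∏ i, ∏ j ∈ Finset.Ioi i, (bX m j - bX m i)

lemma jac_blocks (m : ℕ) : mamJac m = Matrix.fromBlocks (Mblk m)
    (Matrix.of fun (i : Fin (m + 2)) (k : Fin (m + 1)) => mamJac m (Sum.inl i) (Sum.inr k))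
    0 (Pblk m) := by
  refine Matrix.ext fun s t => ?_
  rcases s with i | i <;> rcases t with w | w
  · rw [Matrix.fromBlocks_apply₁₁]
    induction w using Fin.cases with
    | zero => rw [jac11_zero]; simp [Mblk, gM]
    | succ k => rw [jac11_succ]; simp [Mblk, gM]
  · rw [Matrix.fromBlocks_apply₁₂, Matrix.of_apply]
  · rw [Matrix.fromBlocks_apply₂₁, jac21, Matrix.zero_apply]
  · rw [Matrix.fromBlocks_apply₂₂, jac22]; simp [Pblk]

lemma det_jac (m : ℕ) : (mamJac m).det = (Mblk m).det * (Pblk m).det := by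
  rw [jac_blocks, Matrix.det_fromBlocks_zero₂₁]

lemma degQe (m : ℕ) (k : Fin (m + 1)) : (Qe m k).natDegree < m + 1 := by
  have h := natDegree_prod_X_add_C_le (Finset.univ.erase k)
    (fun j : Fin (m + 1) => (X (Sum.inr j) : MvPolynomial (MamIx m) ℝ))
  rw [Finset.card_erase_of_mem (Finset.mem_univ k)] at h
  simp only [Finset.card_univ, Fintype.card_fin] at h
  exact lt_of_le_of_lt h (by omega)

lemma degQf (m : ℕ) : (Qf m).natDegree < m + 2 := by
  have h := natDegree_prod_X_add_C_le (Finset.univ : Finset (Fin (m + 1)))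
    (fun j : Fin (m + 1) => (X (Sum.inr j) : MvPolynomial (MamIx m) ℝ))
  simp only [Finset.card_univ, Fintype.card_fin] at h
  exact lt_of_le_of_lt h (by omega)

lemma deg_gM (m : ℕ) (k : Fin (m + 2)) : (gM m k).natDegree < m + 2 := by
  induction k using Fin.cases with
  | zero => simpa [gM] using degQf m
  | succ k' =>
    have h1 : (Polynomial.X * Qe m k').natDegree ≤ 1 + (Qe m k').natDegree := by
      refine le_trans (Polynomial.natDegree_mul_le) ?_
      simp [Polynomial.natDegree_X]
    have h2 := degQe m k'
    simp only [gM, Fin.cases_succ]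
    omega

lemma eval_Qf_zero (m : ℕ) : (Qf m).eval 0 = betaP m := by
  unfold Qf betaP bX
  rw [eval_prod_X_add_C]
  exact Finset.prod_congr rfl fun j _ => zero_add _

lemma eval_Qf_neg (m : ℕ) (l : Fin (m + 1)) : (Qf m).eval (-(bX m l)) = 0 := by
  unfold Qf bX
  rw [eval_prod_X_add_C]
  exact Finset.prod_eq_zero (Finset.mem_univ l) (by ring)

lemma eval_Qe_neg_ne (m : ℕ) (k l : Fin (m + 1)) (h : l ≠ k) :
    (Qe m k).eval (-(bX m l)) = 0 := by
  unfold Qe bX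
  rw [eval_prod_X_add_C]
  exact Finset.prod_eq_zero (Finset.mem_erase.2 ⟨h, Finset.mem_univ l⟩) (by ring)

lemma eval_Qe_neg_self (m : ℕ) (k : Fin (m + 1)) :
    (Qe m k).eval (-(bX m k)) = eD m k := by
  unfold Qe bX eD
  rw [eval_prod_X_add_C]
  exact Finset.prod_congr rfl fun j _ => by unfold bX; ring

lemma vandP (m : ℕ) :
    Matrix.vandermonde (fun l => -(bX m l)) * Pblk m = Matrix.diagonal (eD m) := by
  rw [show Pblk m = Matrix.of (fun i k : Fin (m + 1) => (Qe m k).coeff i.val) from rfl,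
    vandermonde_mul_coeff _ _ (degQe m)]
  refine Matrix.ext fun l k => ?_
  rw [Matrix.of_apply]
  by_cases h : l = k
  · subst h
    rw [Matrix.diagonal_apply_eq, eval_Qe_neg_self]
  · rw [Matrix.diagonal_apply_ne _ h, eval_Qe_neg_ne m k l h]

lemma vandM (m : ℕ) :
    Matrix.vandermonde (Fin.cases 0 (fun l => -(bX m l))) * Mblk m
      = Matrix.diagonal (Fin.cases (betaP m) (fun k => -(bX m k) * eD m k)) := by
  rw [show Mblk m = Matrix.of (fun i k : Fin (m + 2) => (gM m k).coeff i.val) from rfl,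
    vandermonde_mul_coeff _ _ (deg_gM m)]
  refine Matrix.ext fun l k => ?_
  rw [Matrix.of_apply]
  induction l using Fin.cases with
  | zero =>
    induction k using Fin.cases with
    | zero => simp [gM, eval_Qf_zero]
    | succ k' => simp [gM, Matrix.diagonal_apply_ne _ (Fin.succ_ne_zero k').symm]
  | succ l' =>
    induction k using Fin.cases with
    | zero => simp [gM, Matrix.diagonal_apply_ne _ (Fin.succ_ne_zero l'), eval_Qf_neg]
    | succ k' =>
      by_cases h : l' = k'
      · subst h
        simp [gM, Matrix.diagonal_apply_eq, eval_Qe_neg_self]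
      · have hne : Fin.succ l' ≠ Fin.succ k' := fun hh => h (Fin.succ_injective _ hh)
        simp [gM, Matrix.diagonal_apply_ne _ hne, eval_Qe_neg_ne m k' l' h]

lemma det_vandP (m : ℕ) :
    (Matrix.vandermonde (fun l => -(bX m l))).det = DeltaP m := by
  rw [Matrix.det_vandermonde]
  unfold DeltaP
  exact Finset.prod_congr rfl fun i _ => Finset.prod_congr rfl fun j _ => by ring

lemma det_vandM (m : ℕ) :
    (Matrix.vandermonde (Fin.cases 0 (fun l => -(bX m l)) : Fin (m + 2) →
        MvPolynomial (MamIx m) ℝ)).det = betaN m * DeltaP m := by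
  rw [Matrix.det_vandermonde, Fin.prod_univ_succ]
  congr 1
  · rw [Fin.prod_Ioi_zero]
    unfold betaN
    exact Finset.prod_congr rfl fun j _ => by simp
  · unfold DeltaP
    refine Finset.prod_congr rfl fun i _ => ?_
    rw [Fin.prod_Ioi_succ]
    exact Finset.prod_congr rfl fun j _ => by simp [bX]; ring

lemma erase_eq_Iio_union_Ioi {n : ℕ} (k : Fin n) :
    Finset.univ.erase k = Finset.Iio k ∪ Finset.Ioi k := by
  ext j
  simp only [Finset.mem_erase, Finset.mem_univ, and_true, Finset.mem_union, Finset.mem_Iio,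
    Finset.mem_Ioi]
  refine ⟨fun h => lt_or_gt_of_ne h, fun h => ?_⟩
  rcases h with h | h
  · exact ne_of_lt h
  · exact ne_of_gt h

lemma prod_eD (m : ℕ) : ∏ k, eD m k = DeltaP m * GammaP m := by
  unfold eD
  have hsplit : ∀ k : Fin (m + 1), ∏ j ∈ Finset.univ.erase k, (bX m j - bX m k)
      = (∏ j ∈ Finset.Iio k, (bX m j - bX m k)) * ∏ j ∈ Finset.Ioi k, (bX m j - bX m k) := by
    intro k
    rw [erase_eq_Iio_union_Ioi, Finset.prod_union]
    exact Finset.disjoint_left.2 fun j h1 h2 => absurd (Finset.mem_Ioi.1 h2)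
      (not_lt.2 (le_of_lt (Finset.mem_Iio.1 h1)))
  rw [Finset.prod_congr rfl fun k _ => hsplit k, Finset.prod_mul_distrib]
  congr 1
  · unfold DeltaP
    refine Finset.prod_comm' ?_
    intro k j
    simp [Finset.mem_Iio, Finset.mem_Ioi]

lemma bX_sub_ne_zero (m : ℕ) {i j : Fin (m + 1)} (h : i ≠ j) : bX m i - bX m j ≠ 0 := by
  refine sub_ne_zero_of_ne fun hh => h ?_
  have := MvPolynomial.X_injective hh
  exact Sum.inr_injective this

lemma DeltaP_ne_zero (m : ℕ) : DeltaP m ≠ 0 := by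
  unfold DeltaP
  rw [Finset.prod_ne_zero_iff]
  intro i _
  rw [Finset.prod_ne_zero_iff]
  intro j hj
  exact bX_sub_ne_zero m (ne_of_lt (Finset.mem_Ioi.1 hj))

lemma betaN_ne_zero (m : ℕ) : betaN m ≠ 0 := by
  unfold betaN
  rw [Finset.prod_ne_zero_iff]
  intro k _
  simp [bX, MvPolynomial.X_ne_zero]

lemma det_Pblk (m : ℕ) : (Pblk m).det = GammaP m := by
  have h := congrArg Matrix.det (vandP m)
  rw [Matrix.det_mul, Matrix.det_diagonal, det_vandP, prod_eD] at h
  exact mul_left_cancel₀ (DeltaP_ne_zero m) h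

lemma det_Mblk (m : ℕ) : (Mblk m).det = betaP m * GammaP m := by
  have h := congrArg Matrix.det (vandM m)
  rw [Matrix.det_mul, Matrix.det_diagonal, det_vandM, Fin.prod_univ_succ] at h
  simp only [Fin.cases_zero, Fin.cases_succ] at h
  rw [Finset.prod_mul_distrib] at h
  have h2 : betaN m * DeltaP m * (Mblk m).det
      = betaN m * DeltaP m * (betaP m * GammaP m) := by
    rw [h, show (∏ k : Fin (m+1), -(bX m k)) = betaN m from rfl, prod_eD]
    ring
  exact mul_left_cancel₀ (mul_ne_zero (betaN_ne_zero m) (DeltaP_ne_zero m)) h2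

lemma filter_lt_prod {M : Type*} [CommMonoid M] {n : ℕ} (F : Fin n × Fin n → M) :
    ∏ p ∈ Finset.univ.filter (fun p : Fin n × Fin n => p.1 < p.2), F p
      = ∏ i, ∏ j ∈ Finset.Ioi i, F (i, j) := by
  rw [← Finset.prod_sigma (Finset.univ : Finset (Fin n)) (fun i => Finset.Ioi i)
    (fun x => F (x.1, x.2))]
  refine Finset.prod_nbij (fun p => ⟨p.1, p.2⟩) ?_ ?_ ?_ ?_
  · intro p hp
    simp only [Finset.mem_filter] at hp
    simp [Finset.mem_sigma, Finset.mem_Ioi, hp.2]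
  · intro p hp q hq h
    have h1 : (p.1, p.2) = (q.1, q.2) := by
      have := congrArg (fun x : Σ _ : Fin n, Fin n => (x.1, x.2)) h
      simpa using this
    exact h1
  · intro x hx
    rw [Finset.mem_coe, Finset.mem_sigma] at hx
    exact ⟨(x.1, x.2), Finset.mem_coe.2 (Finset.mem_filter.2
      ⟨Finset.mem_univ _, Finset.mem_Ioi.1 hx.2⟩), rfl⟩
  · intro p hp
    rfl

/-- For the `n`-compartment mammillary model (`n = m + 2 ≥ 2`), the
determinant of the Jacobian of the coefficient map equals, up to sign,
`a₁₂a₁₃⋯a_{1n} · ∏_{2 ≤ i < j ≤ n} (a_{1i} - a_{1j})²`; this is the equation of the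
locus of non-identifiable parameter values. -/
theorem mamJac_det (m : ℕ) :
    (mamJac m).det = mamSing m ∨ (mamJac m).det = -mamSing m := by
  left
  rw [det_jac, det_Mblk, det_Pblk]
  unfold mamSing
  rw [filter_lt_prod (fun p : Fin (m + 1) × Fin (m + 1) =>
    (X (Sum.inr p.1) - X (Sum.inr p.2) : MvPolynomial (MamIx m) ℝ) ^ 2)]
  have hG : GammaP m * GammaP m
      = ∏ i, ∏ j ∈ Finset.Ioi i, ((X (Sum.inr i) - X (Sum.inr j) : MvPolynomial (MamIx m) ℝ)) ^ 2 := by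
    unfold GammaP
    rw [← Finset.prod_mul_distrib]
    refine Finset.prod_congr rfl fun i _ => ?_
    rw [← Finset.prod_mul_distrib]
    refine Finset.prod_congr rfl fun j _ => ?_
    unfold bX
    ring
  calc betaP m * GammaP m * GammaP m
      = betaP m * (GammaP m * GammaP m) := by ring
    _ = _ := by rw [hG]; rfl
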